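/- Let n = 2, let α ≥ 1, and let v₁, v₂ : [k]×[k] → ℝ_{>0} be value functions that are nondecreasing in each coordinate and α-single crossing, i.e., for each i ∈ {1,2} with j the other index, for all profiles s and all t ∈ [k] with t ≥ s_i: α·(v_i(t, s_{-i}) − v_i(s_i, s_{-i})) ≥ v_j(t, s_{-i}) − v_j(s_i, s_{-i}) (where (t, s_{-i}) denotes the profile with agent i's signal replaced by t). Then there is no α-deterministic conflict pair: for all profiles s ≺ s′, max(ρ₂(s), ρ₁(s′)) ≥ 1/α. -/
import Mathlib


namespace Stmt13

variable {k : ℕ}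

/-- Performance ratio of agent 1. -/
noncomputable def rho1 (v1 v2 : Fin k × Fin k → ℝ) (s : Fin k × Fin k) : ℝ :=
  v1 s / max (v1 s) (v2 s)

/-- Performance ratio of agent 2. -/
noncomputable def rho2 (v1 v2 : Fin k × Fin k → ℝ) (s : Fin k × Fin k) : ℝ :=
  v2 s / max (v1 s) (v2 s)

/-- One step of the reachability relation: `(a,s₂) → (b,s₂)` whenever `v₁(a,s₂) < v₁(b,s₂)`,
and `(s₁,c) → (s₁,d)` whenever `v₂(s₁,d) < v₂(s₁,c)`. -/
def step (v1 v2 : Fin k × Fin k → ℝ) (p q : Fin k × Fin k) : Prop :=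
  (p.2 = q.2 ∧ v1 p < v1 q) ∨ (p.1 = q.1 ∧ v2 q < v2 p)

lemma step_coords {v1 v2 : Fin k × Fin k → ℝ} (hm1 : Monotone v1) (hm2 : Monotone v2)
    {p q : Fin k × Fin k} (h : step v1 v2 p q) : p.1 ≤ q.1 ∧ q.2 ≤ p.2 := by
  rcases h with ⟨h2, hv⟩ | ⟨h1, hv⟩
  · refine ⟨?_, le_of_eq h2.symm⟩
    by_contra h
    push_neg at h
    have : q ≤ p := ⟨le_of_lt h, le_of_eq h2.symm⟩
    exact absurd (hm1 this) (not_le.mpr hv)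
  · refine ⟨le_of_eq h1, ?_⟩
    by_contra h
    push_neg at h
    have : p ≤ q := ⟨le_of_eq h1, le_of_lt h⟩
    exact absurd (hm2 this) (not_le.mpr hv)

lemma trans_coords {v1 v2 : Fin k × Fin k → ℝ} (hm1 : Monotone v1) (hm2 : Monotone v2)
    {p q : Fin k × Fin k} (h : Relation.TransGen (step v1 v2) p q) :
    p.1 ≤ q.1 ∧ q.2 ≤ p.2 := by
  induction h with
  | single h => exact step_coords hm1 hm2 h
  | tail _ h ih =>
      have h' := step_coords hm1 hm2 h
      exact ⟨le_trans ih.1 h'.1, le_trans h'.2 ih.2⟩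

/-- with `n = 2`, monotone `α`-single-crossing value functions admit no
`α`-deterministic conflict pair. -/
theorem stmt13 (k : ℕ) (α : ℝ) (hα : 1 ≤ α)
    (v1 v2 : Fin k × Fin k → ℝ)
    (hv1 : ∀ s, 0 < v1 s) (hv2 : ∀ s, 0 < v2 s)
    (hm1 : Monotone v1) (hm2 : Monotone v2)
    (hsc1 : ∀ (s : Fin k × Fin k) (t : Fin k), s.1 ≤ t →
      v2 (t, s.2) - v2 s ≤ α * (v1 (t, s.2) - v1 s))
    (hsc2 : ∀ (s : Fin k × Fin k) (t : Fin k), s.2 ≤ t →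
      v1 (s.1, t) - v1 s ≤ α * (v2 (s.1, t) - v2 s)) :
    ∀ s s', Relation.TransGen (step v1 v2) s s' →
      1 / α ≤ max (rho2 v1 v2 s) (rho1 v1 v2 s') := by
  intro s s' hreach
  obtain ⟨hc1, hc2⟩ := trans_coords hm1 hm2 hreach
  by_contra hcon
  push_neg at hcon
  have hα0 : (0:ℝ) < α := lt_of_lt_of_le one_pos hα
  have hr2 : rho2 v1 v2 s < 1 / α := lt_of_le_of_lt (le_max_left _ _) hcon
  have hr1 : rho1 v1 v2 s' < 1 / α := lt_of_le_of_lt (le_max_right _ _) hcon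
  -- extract α * v2 s < v1 s
  have hMs : (0:ℝ) < max (v1 s) (v2 s) := lt_max_of_lt_left (hv1 s)
  have hMs' : (0:ℝ) < max (v1 s') (v2 s') := lt_max_of_lt_left (hv1 s')
  rw [rho2, div_lt_div_iff₀ hMs hα0] at hr2
  rw [rho1, div_lt_div_iff₀ hMs' hα0] at hr1
  -- hr2 : v2 s * α < max (v1 s) (v2 s) * 1
  have h1 : α * v2 s < v1 s := by
    rcases max_cases (v1 s) (v2 s) with ⟨he, _⟩ | ⟨he, _⟩
    · rw [he] at hr2; linarith
    · rw [he] at hr2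
      nlinarith [hv2 s]
  have h2 : α * v1 s' < v2 s' := by
    rcases max_cases (v1 s') (v2 s') with ⟨he, _⟩ | ⟨he, _⟩
    · rw [he] at hr1
      nlinarith [hv1 s']
    · rw [he] at hr1; linarith
  -- the corner point
  set c : Fin k × Fin k := (s.1, s'.2) with hcdef
  have hA := hsc2 c s.2 hc2   -- v1 (c.1, s.2) - v1 c ≤ α * (v2 (c.1, s.2) - v2 c)
  have hB := hsc1 c s'.1 hc1  -- v2 (s'.1, c.2) - v2 c ≤ α * (v1 (s'.1, c.2) - v1 c)
  have hcs : ((c.1, s.2) : Fin k × Fin k) = s := by simp [hcdef]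
  have hcs' : ((s'.1, c.2) : Fin k × Fin k) = s' := by simp [hcdef]
  rw [hcs] at hA
  rw [hcs'] at hB
  have hx : (0:ℝ) < v1 c := hv1 c
  have hy : (0:ℝ) < v2 c := hv2 c
  -- from hA and h1 : α * v2 c < v1 c ; from hB and h2 : α * v1 c < v2 c
  have k1 : α * v2 c < v1 c := by nlinarith
  have k2 : α * v1 c < v2 c := by nlinarith
  nlinarith [mul_pos hα0 hx, mul_pos hα0 hy]

end Stmt13
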